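/- If a vertex x₁…x_ℓ of the cyclic Kautz digraph CK(d,ℓ) lies on a closed walk of length g < ℓ, then the sequence is periodic with period g, i.e., xᵢ = x_{i+g} for all i = 1,…,ℓ−g; consequently, if ℓ ≡ 1 (mod g) then no such closed walk exists. -/
import Mathlib


/-- Consecutive entries are distinct. -/
abbrev consecNe {m n : ℕ} (x : Fin m → Fin n) : Prop :=
  ∀ i j : Fin m, j.val = i.val + 1 → x i ≠ x j

/-- First entry distinct from last entry. -/
abbrev firstNeLast {m n : ℕ} (x : Fin m → Fin n) : Prop :=
  ∀ i j : Fin m, i.val = 0 → j.val = m - 1 → x i ≠ x j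

/-- Vertex of the cyclic Kautz digraph. -/
abbrev ckVert {m n : ℕ} (x : Fin m → Fin n) : Prop := consecNe x ∧ firstNeLast x

/-- Arc of the cyclic Kautz digraph: `y` is the left shift of `x` with a new last
symbol distinct from `x₂` and `x_ℓ`. -/
abbrev ckAdj {m n : ℕ} (x y : Fin m → Fin n) : Prop :=
  (∀ i j : Fin m, j.val = i.val + 1 → y i = x j) ∧
  (∀ i j : Fin m, i.val = m - 1 → j.val = 1 → y i ≠ x j) ∧
  (∀ i : Fin m, i.val = m - 1 → y i ≠ x i)

/-- A walk of length `k` in `CK(d,ℓ)` from `u` to `v`: a sequence of `k+1` vertices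
starting at `u`, ending at `v`, with consecutive vertices adjacent. -/
abbrev ckWalk {m n : ℕ} (k : ℕ) (u v : Fin m → Fin n) : Prop :=
  ∃ w : Fin (k + 1) → Fin m → Fin n, w 0 = u ∧ w (Fin.last k) = v ∧
    (∀ i, ckVert (w i)) ∧ ∀ i j : Fin (k + 1), j.val = i.val + 1 → ckAdj (w i) (w j)

/-- If a vertex `x` of `CK(d,ℓ)` lies on a closed walk of length `g < ℓ`, then the
sequence `x` is periodic with period `g` (`xᵢ = x_{i+g}` for `1 ≤ i ≤ ℓ−g`);
consequently, if `ℓ ≡ 1 (mod g)` then no such closed walk exists. -/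
theorem stmt12 (d ℓ g : ℕ) (hℓ : 2 ≤ ℓ) (hg : 1 ≤ g) (hgℓ : g < ℓ)
    (x : Fin ℓ → Fin (d + 1)) (hx : ckVert x) (hw : ckWalk g x x) :
    (∀ i j : Fin ℓ, j.val = i.val + g → x i = x j) ∧ ℓ % g ≠ 1 := by
  obtain ⟨w, hw0, hwg, _, hadj⟩ := hw
  have key : ∀ t : ℕ, ∀ ht : t ≤ g, ∀ i : ℕ, ∀ hi : i + t < ℓ,
      w ⟨t, Nat.lt_succ_of_le ht⟩ ⟨i, lt_of_le_of_lt (Nat.le_add_right i t) hi⟩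
        = x ⟨i + t, hi⟩ := by
    intro t
    induction t with
    | zero =>
      intro ht i hi
      simp only [Nat.add_zero]
      have : w ⟨0, Nat.lt_succ_of_le ht⟩ = x := hw0
      rw [this]
    | succ t ih =>
      intro ht i hi
      have ht' : t ≤ g := Nat.le_of_succ_le ht
      have hi' : (i + 1) + t < ℓ := by omega
      have hadj' := (hadj ⟨t, Nat.lt_succ_of_le ht'⟩ ⟨t + 1, Nat.lt_succ_of_le ht⟩ rfl).1
      have := hadj' ⟨i, by omega⟩ ⟨i + 1, by omega⟩ rfl
      have h2 := ih ht' (i + 1) hi'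
      have hx2 : x ⟨i + 1 + t, hi'⟩ = x ⟨i + (t + 1), hi⟩ := by
        congr 1; apply Fin.ext; simp; omega
      rw [← hx2, ← h2]
      exact this
  have per : ∀ i j : Fin ℓ, j.val = i.val + g → x i = x j := by
    intro i j hij
    have hi : i.val + g < ℓ := hij ▸ j.isLt
    have := key g le_rfl i.val hi
    have hlast : w ⟨g, Nat.lt_succ_of_le le_rfl⟩ = x := hwg
    rw [hlast] at this
    have h1 : (⟨i.val, _⟩ : Fin ℓ) = i := rfl
    calc x i = x ⟨i.val + g, hi⟩ := this
      _ = x j := by congr 1; apply Fin.ext; simp; omega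
  refine ⟨per, ?_⟩
  intro hmod
  have hrep : ∀ k : ℕ, ∀ hk : k * g < ℓ, x ⟨0, by omega⟩ = x ⟨k * g, hk⟩ := by
    intro k
    induction k with
    | zero => intro hk; congr 1; apply Fin.ext; simp
    | succ k ih =>
      intro hk
      have hk' : k * g < ℓ := by nlinarith [Nat.succ_mul k g]
      have := per ⟨k * g, hk'⟩ ⟨(k + 1) * g, hk⟩ (by simp [Nat.succ_mul])
      rw [ih hk', this]
  set q := ℓ / g with hq
  have hℓeq : ℓ = q * g + 1 := by
    have := Nat.div_add_mod' ℓ g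
    rw [hq]
    omega
  have hql : q * g < ℓ := by omega
  have := hrep q hql
  exact hx.2 ⟨0, by omega⟩ ⟨q * g, hql⟩ rfl (by simp; omega) this
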